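/- Let s ∈ (0, 1/2) and let g(z) = Γ(2s−z) Γ(z+1)/Γ(2s) − sin(π(s−z))/sin(πs). Then there exists M > 0 (possibly depending on s) such that g has no zeros in the region {z ∈ ℂ : Re z ∈ (0, 2s) and Im z ∈ [0,M]}. -/

import Mathlib

open Set Filter Topology

/-!
STATEMENT 15: For s ∈ (0, 1/2), with g(z) = Γ(2s−z)Γ(z+1)/Γ(2s) − sin(π(s−z))/sin(πs),
there exists M > 0 such that g has no zeros in
{z ∈ ℂ : Re z ∈ (0, 2s), Im z ∈ [0, M]}.
-/

noncomputable def gFun (s : ℝ) (z : ℂ) : ℂ :=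
  Complex.Gamma (2 * s - z) * Complex.Gamma (z + 1) / Complex.Gamma (2 * s) -
    Complex.sin (Real.pi * (s - z)) / Complex.sin (Real.pi * s)

/-- Auxiliary pole-free version of `gFun` (multiplied by `(2s - z) Γ(2s) sin(πs)`). -/
noncomputable def hFun (s : ℝ) (z : ℂ) : ℂ :=
  Complex.sin (Real.pi * s) * (Complex.Gamma (2 * s - z + 1) * Complex.Gamma (z + 1)) -
    (2 * s - z) * Complex.Gamma (2 * s) * Complex.sin (Real.pi * (s - z))

lemma gamma_pair {s x : ℝ} (hs0 : 0 < s) (hs1 : s < 1/2) (hx : 0 < x) (hx2 : x < 2*s) :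
    Real.Gamma (2*s) ≤ Real.Gamma (2*s - x) * Real.Gamma (x + 1) := by
  have hc := Real.convexOn_log_Gamma
  set u : ℝ := 2*s - x with hu
  set v : ℝ := x + 1 with hv
  have hu0 : (0:ℝ) < u := by simp [hu]; linarith
  have hv0 : (0:ℝ) < v := by simp [hv]; linarith
  set t : ℝ := (x + 1 - 2*s)/(2*x + 1 - 2*s) with ht
  have hden : (0:ℝ) < 2*x + 1 - 2*s := by linarith
  have ht0 : 0 ≤ t := div_nonneg (by linarith) hden.le
  have ht1 : t ≤ 1 := by
    rw [ht, div_le_one hden]; linarith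
  have h1t : 0 ≤ 1 - t := by linarith
  have hsum : t + (1 - t) = 1 := by ring
  have hA : (Real.log ∘ Real.Gamma) (t • u + (1-t) • v)
      ≤ t • (Real.log ∘ Real.Gamma) u + (1-t) • (Real.log ∘ Real.Gamma) v :=
    hc.2 (mem_Ioi.mpr hu0) (mem_Ioi.mpr hv0) ht0 h1t hsum
  have hB : (Real.log ∘ Real.Gamma) ((1-t) • u + t • v)
      ≤ (1-t) • (Real.log ∘ Real.Gamma) u + t • (Real.log ∘ Real.Gamma) v :=
    hc.2 (mem_Ioi.mpr hu0) (mem_Ioi.mpr hv0) h1t ht0 (by ring)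
  have key1 : t • u + (1-t) • v = 2*s := by
    rw [ht, hu, hv, smul_eq_mul, smul_eq_mul, one_sub_div hden.ne', div_mul_eq_mul_div,
      div_mul_eq_mul_div, ← add_div, div_eq_iff hden.ne']; ring
  have key2 : (1-t) • u + t • v = 1 := by
    rw [ht, hu, hv, smul_eq_mul, smul_eq_mul, one_sub_div hden.ne', div_mul_eq_mul_div,
      div_mul_eq_mul_div, ← add_div, div_eq_iff hden.ne']; ring
  rw [key1] at hA; rw [key2] at hB
  have hsumlog : Real.log (Real.Gamma (2*s)) + Real.log (Real.Gamma 1)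
      ≤ Real.log (Real.Gamma u) + Real.log (Real.Gamma v) := by
    have := add_le_add hA hB
    simp only [Function.comp_apply, smul_eq_mul] at this ⊢
    linarith
  have hG2s : 0 < Real.Gamma (2*s) := Real.Gamma_pos_of_pos (by linarith)
  have hGu : 0 < Real.Gamma u := Real.Gamma_pos_of_pos hu0
  have hGv : 0 < Real.Gamma v := Real.Gamma_pos_of_pos hv0
  rw [Real.Gamma_one, Real.log_one, add_zero, ← Real.log_mul (ne_of_gt hGu) (ne_of_gt hGv)] at hsumlog
  exact (Real.log_le_log_iff hG2s (by positivity)).mp hsumlog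

lemma sin_lt_sin {s x : ℝ} (hs0 : 0 < s) (hs1 : s < 1/2) (hx : 0 < x) (hx2 : x ≤ 2*s) :
    Real.sin (Real.pi * (s - x)) < Real.sin (Real.pi * s) := by
  have hpi := Real.pi_pos
  have h1 : Real.pi * (s - x) ∈ Icc (-(Real.pi/2)) (Real.pi/2) := by
    constructor <;> nlinarith
  have h2 : Real.pi * s ∈ Icc (-(Real.pi/2)) (Real.pi/2) := by
    constructor <;> nlinarith
  exact Real.strictMonoOn_sin h1 h2 (by nlinarith)

lemma hre_pos {s x : ℝ} (hs0 : 0 < s) (hs1 : s < 1/2) (hx : 0 < x) (hx2 : x ≤ 2*s) :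
    0 < Real.sin (Real.pi * s) * (Real.Gamma (2*s - x + 1) * Real.Gamma (x + 1)) -
      (2*s - x) * Real.Gamma (2*s) * Real.sin (Real.pi * (s - x)) := by
  have hpi := Real.pi_pos
  have hsin : 0 < Real.sin (Real.pi * s) :=
    Real.sin_pos_of_pos_of_lt_pi (by positivity) (by nlinarith)
  have hG2s : 0 < Real.Gamma (2*s) := Real.Gamma_pos_of_pos (by linarith)
  have hGx1 : 0 < Real.Gamma (x+1) := Real.Gamma_pos_of_pos (by linarith)
  rcases eq_or_lt_of_le hx2 with heq | hlt
  · subst heq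
    have e1 : 2*s - (2*s) + 1 = (1:ℝ) := by ring
    have e2 : 2*s - (2*s) = (0:ℝ) := by ring
    rw [e1, e2, Real.Gamma_one, zero_mul, zero_mul, sub_zero, one_mul]
    positivity
  · have hc0 : 0 < 2*s - x := by linarith
    have hadd : Real.Gamma (2*s - x + 1) = (2*s - x) * Real.Gamma (2*s - x) :=
      Real.Gamma_add_one (ne_of_gt hc0)
    rw [hadd]
    have hpair := gamma_pair hs0 hs1 hx hlt
    have hsl := sin_lt_sin hs0 hs1 hx hx2
    nlinarith [mul_lt_mul_of_pos_left hsl (mul_pos hc0 hG2s),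
      mul_le_mul_of_nonneg_left (mul_le_mul_of_nonneg_left hpair hsin.le) hc0.le]

lemma hFun_real (s x : ℝ) :
    hFun s (x : ℂ) = ((Real.sin (Real.pi * s) * (Real.Gamma (2*s - x + 1) * Real.Gamma (x + 1)) -
      (2*s - x) * Real.Gamma (2*s) * Real.sin (Real.pi * (s - x)) : ℝ) : ℂ) := by
  rw [hFun]
  rw [show (2 * (s:ℂ) - (x:ℂ) + 1) = ((2*s - x + 1 : ℝ) : ℂ) by push_cast; ring,
    show ((x:ℂ) + 1) = ((x + 1 : ℝ) : ℂ) by push_cast; ring,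
    show ((2:ℂ) * s) = ((2*s : ℝ) : ℂ) by push_cast; ring,
    show ((Real.pi : ℂ) * ((s:ℂ) - (x:ℂ))) = ((Real.pi * (s - x) : ℝ) : ℂ) by push_cast; ring,
    show ((Real.pi : ℂ) * (s:ℂ)) = ((Real.pi * s : ℝ) : ℂ) by push_cast; ring,
    Complex.Gamma_ofReal, Complex.Gamma_ofReal, Complex.Gamma_ofReal,
    ← Complex.ofReal_sin, ← Complex.ofReal_sin]
  push_cast
  ring

lemma hFun_eq_mul {s : ℝ} (hs0 : 0 < s) (hs1 : s < 1/2) {z : ℂ} (hz : 2 * (s:ℂ) - z ≠ 0) :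
    hFun s z = (2 * (s:ℂ) - z) * Complex.Gamma (2*s) * Complex.sin (Real.pi * s) * gFun s z := by
  have hpi := Real.pi_pos
  have hG : Complex.Gamma (2*(s:ℂ)) ≠ 0 := by
    rw [show (2*(s:ℂ)) = ((2*s:ℝ):ℂ) by push_cast; ring, Complex.Gamma_ofReal]
    exact_mod_cast (Real.Gamma_pos_of_pos (by linarith)).ne'
  have hsin : Complex.sin ((Real.pi:ℂ) * s) ≠ 0 := by
    rw [show ((Real.pi:ℂ)*(s:ℂ)) = ((Real.pi*s:ℝ):ℂ) by push_cast; ring, ← Complex.ofReal_sin]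
    exact_mod_cast (Real.sin_pos_of_pos_of_lt_pi (by positivity) (by nlinarith)).ne'
  have hG' : Complex.Gamma ((s:ℂ) * 2) ≠ 0 := by rw [mul_comm]; exact hG
  rw [hFun, gFun, Complex.Gamma_add_one _ hz]
  field_simp

lemma hFun_analytic {s : ℝ} (hs0 : 0 < s) :
    AnalyticOnNhd ℂ (hFun s) {z : ℂ | -1 < z.re ∧ z.re < 2*s + 1} := by
  have hopen : IsOpen {z : ℂ | -1 < z.re ∧ z.re < 2*s + 1} := by
    have he : {z : ℂ | -1 < z.re ∧ z.re < 2*s + 1} = Complex.re ⁻¹' (Ioo (-1) (2*s+1)) := rfl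
    rw [he]; exact isOpen_Ioo.preimage Complex.continuous_re
  refine DifferentiableOn.analyticOnNhd
    (fun z hz => DifferentiableAt.differentiableWithinAt ?_) hopen
  obtain ⟨hz1, hz2⟩ := hz
  have d1 : DifferentiableAt ℂ (fun z : ℂ => Complex.Gamma (2 * (s:ℂ) - z + 1)) z := by
    have harg : ∀ m : ℕ, 2 * (s:ℂ) - z + 1 ≠ -(m:ℂ) := by
      intro m h
      have h2 := congrArg Complex.re h
      simp only [Complex.add_re, Complex.sub_re, Complex.mul_re, Complex.ofReal_re,
        Complex.ofReal_im, Complex.one_re, Complex.neg_re, Complex.natCast_re] at h2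
      have hm : (0:ℝ) ≤ (m:ℝ) := Nat.cast_nonneg m
      norm_num at h2
      linarith
    exact (Complex.differentiableAt_Gamma _ harg).comp z (by fun_prop)
  have d2 : DifferentiableAt ℂ (fun z : ℂ => Complex.Gamma (z + 1)) z := by
    have harg : ∀ m : ℕ, z + 1 ≠ -(m:ℂ) := by
      intro m h
      have h2 := congrArg Complex.re h
      simp only [Complex.add_re, Complex.one_re, Complex.neg_re, Complex.natCast_re] at h2
      have hm : (0:ℝ) ≤ (m:ℝ) := Nat.cast_nonneg m
      linarith
    exact (Complex.differentiableAt_Gamma _ harg).comp z (by fun_prop)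
  have d3 : DifferentiableAt ℂ (fun z : ℂ => Complex.sin ((Real.pi:ℂ) * ((s:ℂ) - z))) z :=
    (Complex.differentiable_sin _).comp z (by fun_prop)
  have d4 : DifferentiableAt ℂ (fun z : ℂ => 2 * (s:ℂ) - z) z := by fun_prop
  exact ((differentiableAt_const _).mul (d1.mul d2)).sub
    ((d4.mul (differentiableAt_const _)).mul d3)

theorem gFun_no_zeros_low_s (s : ℝ) (hs : s ∈ Set.Ioo (0 : ℝ) (1/2)) :
    ∃ M > 0, ∀ z : ℂ, z.re ∈ Set.Ioo (0 : ℝ) (2 * s) →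
      z.im ∈ Set.Icc (0 : ℝ) M → gFun s z ≠ 0 := by
  obtain ⟨hs0, hs1⟩ := hs
  by_contra hcon
  push_neg at hcon
  have hex : ∀ n : ℕ, ∃ w : ℂ, w.re ∈ Ioo (0:ℝ) (2*s) ∧
      w.im ∈ Icc (0:ℝ) (1/(n+1)) ∧ gFun s w = 0 := by
    intro n
    obtain ⟨w, h1, h2, h3⟩ := hcon (1/(n+1)) (by positivity)
    exact ⟨w, h1, h2, h3⟩
  choose z hre him hzero using hex
  have hzne : ∀ n, 2*(s:ℂ) - z n ≠ 0 := by
    intro n h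
    have h2 := congrArg Complex.re h
    simp only [Complex.sub_re, Complex.mul_re, Complex.ofReal_re, Complex.ofReal_im,
      Complex.zero_re] at h2
    have := (hre n).2
    norm_num at h2
    linarith
  have hzero' : ∀ n, hFun s (z n) = 0 := by
    intro n
    rw [hFun_eq_mul hs0 hs1 (hzne n), hzero n, mul_zero]
  obtain ⟨a, ha, φ, hφ, hconv⟩ := (isCompact_Icc (a := (0:ℝ)) (b := 2*s)).tendsto_subseq
    (x := fun n => (z n).re) (fun n => ⟨(hre n).1.le, (hre n).2.le⟩)
  have himt : Tendsto (fun n => (z (φ n)).im) atTop (𝓝 0) := by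
    refine squeeze_zero (fun n => (him (φ n)).1) (fun n => le_trans (him (φ n)).2 ?_)
      tendsto_one_div_add_atTop_nhds_zero_nat
    have : (n:ℝ) + 1 ≤ (φ n : ℝ) + 1 := by
      have h : n ≤ φ n := hφ.le_apply
      have h2 : (n:ℝ) ≤ (φ n : ℝ) := by exact_mod_cast h
      linarith
    exact one_div_le_one_div_of_le (by positivity) this
  have hztend : Tendsto (fun n => z (φ n)) atTop (𝓝 (a:ℂ)) := by
    have h1 : Tendsto (fun n => ((z (φ n)).re : ℂ) + ((z (φ n)).im : ℂ) * Complex.I)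
        atTop (𝓝 ((a:ℂ) + (0:ℂ) * Complex.I)) := by
      exact ((Complex.continuous_ofReal.tendsto a).comp hconv).add
        ((((Complex.continuous_ofReal.tendsto 0).comp himt)).mul_const Complex.I)
    simpa [Complex.re_add_im] using h1
  set U : Set ℂ := {w : ℂ | -1 < w.re ∧ w.re < 2*s + 1} with hU
  have hA := hFun_analytic (s := s) hs0
  have hmemU : (a:ℂ) ∈ U := by
    constructor <;> simp only [Complex.ofReal_re] <;> [linarith [ha.1]; linarith [ha.2]]
  have hha : hFun s (a:ℂ) = 0 := by
    have hc : Tendsto (fun n => hFun s (z (φ n))) atTop (𝓝 (hFun s (a:ℂ))) :=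
      ((hA _ hmemU).continuousAt.tendsto).comp hztend
    have hc0 : Tendsto (fun n => hFun s (z (φ n))) atTop (𝓝 0) :=
      tendsto_const_nhds.congr (fun n => (hzero' (φ n)).symm)
    exact tendsto_nhds_unique hc hc0
  rcases eq_or_lt_of_le ha.1 with heq | hlt
  · -- a = 0 : identity theorem
    have hne0 : ∀ n, z (φ n) ≠ 0 := by
      intro n h
      have := (hre (φ n)).1
      rw [h] at this
      simp at this
    have hztend0 : Tendsto (fun n => z (φ n)) atTop (𝓝[≠] (0:ℂ)) := by
      refine tendsto_nhdsWithin_of_tendsto_nhds_of_eventually_within _ ?_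
        (Eventually.of_forall hne0)
      rw [← heq] at hztend
      simpa using hztend
    have hfreq : ∃ᶠ w in 𝓝[≠] (0:ℂ), hFun s w = 0 :=
      hztend0.frequently (Frequently.of_forall fun n => hzero' (φ n))
    have hpre : IsPreconnected U := by
      have he : U = Complex.reLm ⁻¹' (Ioo (-1) (2*s+1)) := by
        ext w; simp [hU, Complex.reLm]
      rw [he]
      exact ((convex_Ioo (-1:ℝ) (2*s+1)).linear_preimage Complex.reLm).isPreconnected
    have h0U : (0:ℂ) ∈ U := by constructor <;> simp <;> linarith
    have hEq := hA.eqOn_zero_of_preconnected_of_frequently_eq_zero hpre h0U hfreq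
    have hsU : (s:ℂ) ∈ U := by
      constructor <;> simp only [Complex.ofReal_re] <;> linarith
    have hz0 : hFun s (s:ℂ) = 0 := hEq hsU
    rw [hFun_real] at hz0
    have hposs := hre_pos hs0 hs1 hs0 (by linarith : s ≤ 2*s)
    rw [Complex.ofReal_eq_zero] at hz0
    linarith
  · -- 0 < a ≤ 2s : real positivity
    rw [hFun_real] at hha
    have hposs := hre_pos hs0 hs1 hlt ha.2
    rw [Complex.ofReal_eq_zero] at hha
    linarith
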